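/- Let p ≥ 2 be a real number, m a positive integer, r ∈ ℝ^m with r ≥ 0 entrywise, s ≥ 0, and x, δ ∈ ℝ^m. Then 2^{-p} · h_p(r + s|x|^{p-2}, s, δ) ≤ h_p(r, s, x + δ) − h_p(r, s, x) − δᵀ∇_x h_p(r, s, x) ≤ 2^{2p} · h_p(r + s|x|^{p-2}, s, δ), where |x|^{p-2} denotes the vector with entries |x_i|^{p-2} and the gradient has entries (∇_x h_p(r, s, x))_i = 2 r_i x_i + p s |x_i|^{p-2} x_i. -/

import Mathlib

open Finset

/-- The `r`-smoothed `s`-weighted `p`-norm: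
`h_p(r, s, x) = Σ_i (r_i x_i^2 + s |x_i|^p)`. -/
noncomputable def hP (p : ℝ) {m : ℕ} (r : Fin m → ℝ) (s : ℝ) (x : Fin m → ℝ) : ℝ :=
  ∑ i, (r i * x i ^ 2 + s * |x i| ^ p)

/-- The gradient of `h_p(r, s, ·)` at `x`: its `i`-th entry is
`2 r_i x_i + p s |x_i|^{p-2} x_i`. -/
noncomputable def gradHP (p : ℝ) {m : ℕ} (r : Fin m → ℝ) (s : ℝ) (x : Fin m → ℝ) :
    Fin m → ℝ :=
  fun i => 2 * r i * x i + p * s * |x i| ^ (p - 2) * x i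


open Real

/-- `u * u^(q-1) = u^q` for `0 ≤ u`, `0 < q`. -/
lemma rpow_succ' {u : ℝ} (hu : 0 ≤ u) {q : ℝ} (hq : 0 < q) : u * u ^ (q - 1) = u ^ q := by
  rcases hu.eq_or_lt with rfl | hu'
  · rw [Real.zero_rpow hq.ne', zero_mul]
  · rw [show q = 1 + (q - 1) by ring, Real.rpow_add hu', Real.rpow_one,
      show 1 + (q - 1) - 1 = q - 1 by ring]

/-- Bernoulli lower bound (tangent line below): `u^q + q u^(q-1)(v-u) ≤ v^q`. -/
lemma bern_low {q : ℝ} (hq : 1 < q) {u v : ℝ} (hu : 0 ≤ u) (huv : u ≤ v) :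
    u ^ q + q * u ^ (q - 1) * (v - u) ≤ v ^ q := by
  rcases hu.eq_or_lt with rfl | hu'
  · rw [Real.zero_rpow (by linarith : q ≠ 0), Real.zero_rpow (by intro h; rw [sub_eq_zero] at h; linarith : q - 1 ≠ 0)]
    have := Real.rpow_nonneg huv q
    nlinarith [this]
  · have ht : (0:ℝ) ≤ (v - u) / u := div_nonneg (by linarith) hu'.le
    have hb := one_add_mul_self_le_rpow_one_add (by linarith : (-1:ℝ) ≤ (v - u) / u) hq.le
    have h1 : 1 + (v - u) / u = v / u := by field_simp; ring
    rw [h1, Real.div_rpow (by linarith) hu'.le] at hb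
    have hup : (0:ℝ) < u ^ q := Real.rpow_pos_of_pos hu' q
    have h2 := mul_le_mul_of_nonneg_left hb hup.le
    rw [mul_div_cancel₀ _ hup.ne'] at h2
    have h3 : u ^ (q - 1) = u ^ q / u := by rw [Real.rpow_sub hu', Real.rpow_one]
    rw [h3]
    have : u ^ q * (1 + q * ((v - u) / u)) = u ^ q + q * (u ^ q / u) * (v - u) := by
      field_simp
    linarith [this ▸ h2]

/-- Bernoulli upper bound: `v^q - u^q ≤ q v^(q-1) (v-u)` for `0 ≤ u ≤ v`. -/
lemma bern_up {q : ℝ} (hq : 1 ≤ q) {u v : ℝ} (hu : 0 ≤ u) (huv : u ≤ v) :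
    v ^ q - u ^ q ≤ q * v ^ (q - 1) * (v - u) := by
  rcases (hu.trans huv).eq_or_lt with rfl | hv
  · have : u = 0 := le_antisymm huv hu
    subst this
    simp
  · have ht : (-1:ℝ) ≤ (u - v) / v := by
      rw [le_div_iff₀ hv]; linarith
    have hb := one_add_mul_self_le_rpow_one_add ht hq
    have h1 : 1 + (u - v) / v = u / v := by field_simp; ring
    rw [h1, Real.div_rpow hu hv.le] at hb
    have hvp : (0:ℝ) < v ^ q := Real.rpow_pos_of_pos hv q
    have h2 := mul_le_mul_of_nonneg_left hb hvp.le
    rw [mul_div_cancel₀ _ hvp.ne'] at h2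
    have h3 : v ^ (q - 1) = v ^ q / v := by rw [Real.rpow_sub hv, Real.rpow_one]
    rw [h3]
    have : v ^ q * (1 + q * ((u - v) / v)) = v ^ q + q * (v ^ q / v) * (u - v) := by
      field_simp
    linarith [this ▸ h2]

/-- Superadditivity: `u^q + w^q ≤ (u+w)^q` for `q ≥ 1`, `u, w ≥ 0`. -/
lemma superadd {q : ℝ} (hq : 1 ≤ q) {u w : ℝ} (hu : 0 ≤ u) (hw : 0 ≤ w) :
    u ^ q + w ^ q ≤ (u + w) ^ q := by
  have hq0 : (0:ℝ) < q := by linarith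
  have h1 : u ^ q ≤ u * (u + w) ^ (q - 1) := by
    calc u ^ q = u * u ^ (q - 1) := (rpow_succ' hu hq0).symm
    _ ≤ u * (u + w) ^ (q - 1) :=
      mul_le_mul_of_nonneg_left (Real.rpow_le_rpow hu (by linarith) (by linarith)) hu
  have h2 : w ^ q ≤ w * (u + w) ^ (q - 1) := by
    calc w ^ q = w * w ^ (q - 1) := (rpow_succ' hw hq0).symm
    _ ≤ w * (u + w) ^ (q - 1) :=
      mul_le_mul_of_nonneg_left (Real.rpow_le_rpow hw (by linarith) (by linarith)) hw
  have h3 : (u + w) * (u + w) ^ (q - 1) = (u + w) ^ q := rpow_succ' (by linarith) hq0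
  nlinarith [h1, h2, h3]

/-- Convexity: `(u+w)^q ≤ 2^(q-1) (u^q + w^q)`. -/
lemma convex2 {q : ℝ} (hq : 1 ≤ q) {u w : ℝ} (hu : 0 ≤ u) (hw : 0 ≤ w) :
    (u + w) ^ q ≤ 2 ^ (q - 1) * (u ^ q + w ^ q) := by
  have hc := (convexOn_rpow hq).2 (Set.mem_Ici.mpr hu) (Set.mem_Ici.mpr hw)
    (by norm_num : (0:ℝ) ≤ 1/2) (by norm_num : (0:ℝ) ≤ 1/2) (by norm_num)
  simp only [smul_eq_mul] at hc
  -- hc : (1/2*u + 1/2*w)^q ≤ 1/2 * u^q + 1/2 * w^q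
  have h1 : ((u + w) / 2) ^ q = (u + w) ^ q / 2 ^ q := Real.div_rpow (by linarith) (by norm_num) q
  have h2 : (1/2*u + 1/2*w) = (u + w)/2 := by ring
  rw [h2, h1] at hc
  have h2q : (0:ℝ) < 2 ^ q := Real.rpow_pos_of_pos (by norm_num) q
  have h3 : (2:ℝ) ^ (q - 1) = 2 ^ q / 2 := by rw [Real.rpow_sub (by norm_num), Real.rpow_one]
  rw [h3]
  rw [div_le_iff₀ h2q] at hc
  nlinarith [hc]

/-- `t ≤ 2^t` for `t ≥ 1`. -/
lemma le_two_rpow {t : ℝ} (ht : 1 ≤ t) : t ≤ (2:ℝ) ^ t := by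
  have h1 : (2:ℝ) ^ t = 2 * 2 ^ (t - 1) := by
    rw [show t = 1 + (t - 1) by ring, Real.rpow_add (by norm_num : (0:ℝ) < 2), Real.rpow_one,
      show 1 + (t - 1) - 1 = t - 1 by ring]
  have h2 : (2:ℝ) ^ (t - 1) = Real.exp ((t - 1) * Real.log 2) := by
    rw [Real.rpow_def_of_pos (by norm_num)]; ring_nf
  have h3 := Real.add_one_le_exp ((t - 1) * Real.log 2)
  have hl : (0.6931471803:ℝ) < Real.log 2 := Real.log_two_gt_d9
  have ht1 : 0 ≤ t - 1 := by linarith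
  nlinarith [mul_le_mul_of_nonneg_left hl.le ht1]

/-- mixed bound: `a^(p-2) * (y*y) ≤ a^(p-1) * y + y^p` for `a, y ≥ 0`, `p > 2`. -/
lemma mixed {p : ℝ} (hp : 2 < p) {a y : ℝ} (ha : 0 ≤ a) (hy : 0 ≤ y) :
    a ^ (p - 2) * (y * y) ≤ a ^ (p - 1) * y + y ^ p := by
  have hkey : a ^ (p - 2) * a = a ^ (p - 1) := by
    rw [mul_comm]
    have := rpow_succ' ha (show (0:ℝ) < p - 1 by linarith)
    rwa [show p - 1 - 1 = p - 2 by ring] at this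
  rcases le_or_gt y a with hya | hya
  · have h1 : a ^ (p - 2) * y ≤ a ^ (p - 2) * a :=
      mul_le_mul_of_nonneg_left hya (Real.rpow_nonneg ha _)
    have h2 : 0 ≤ y ^ p := Real.rpow_nonneg hy p
    nlinarith [Real.rpow_nonneg ha (p-2), Real.rpow_nonneg ha (p-1)]
  · have h1 : a ^ (p - 2) ≤ y ^ (p - 2) := Real.rpow_le_rpow ha hya.le (by linarith)
    have h2 : y ^ (p - 2) * (y * y) = y ^ p := by
      have k1 : y * y ^ (p - 1 - 1) = y ^ (p - 1) := rpow_succ' hy (by linarith)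
      have k2 : y * y ^ (p - 1) = y ^ p := by
        have := rpow_succ' hy (show (0:ℝ) < p by linarith)
        rwa [show p - 1 = p - 1 by ring] at this
      rw [show p - 2 = p - 1 - 1 by ring]
      nlinarith [k1, k2]
    nlinarith [mul_le_mul_of_nonneg_right h1 (mul_nonneg hy hy), Real.rpow_nonneg ha (p-1)]

lemma lemI {p : ℝ} (hp : 2 < p) {a : ℝ} (ha : 0 ≤ a) (b : ℝ) :
    2 ^ (1 - p) * |b| ^ p ≤ |a + b| ^ p - |a| ^ p - p * |a| ^ (p - 2) * a * b := by
  have hp1 : (1:ℝ) < p := by linarith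
  have hp11 : (1:ℝ) < p - 1 := by linarith
  rw [abs_of_nonneg ha]
  have hkey : a ^ (p - 2) * a = a ^ (p - 1) := by
    rw [mul_comm]
    have := rpow_succ' ha (show (0:ℝ) < p - 1 by linarith)
    rwa [show p - 1 - 1 = p - 2 by ring] at this
  rw [mul_assoc p (a ^ (p-2)) a, hkey]
  have h2pos : (0:ℝ) < 2 := by norm_num
  have h8 : (2:ℝ) ^ (1 - p) = 2 * 2 ^ (-p) := by
    rw [show (1:ℝ) - p = 1 + -p by ring, Real.rpow_add h2pos, Real.rpow_one]
  rcases lt_trichotomy b 0 with hb | rfl | hb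
  · -- b < 0
    rw [abs_of_neg hb]
    rcases le_or_gt 0 (a + b) with hab | hab
    · -- no crossing : a + b ≥ 0
      rw [abs_of_nonneg hab]
      have hm : (0:ℝ) ≤ a + b / 2 := by linarith
      have h1 := bern_up hp1.le hm (show a + b / 2 ≤ a by linarith)
      have h2 := bern_up hp1.le hab (show a + b ≤ a + b / 2 by linarith)
      have h3 := superadd (by linarith : (1:ℝ) ≤ p - 1) hm (show (0:ℝ) ≤ -b/2 by linarith)
      rw [show a + b/2 + -b/2 = a by ring] at h3
      have h6 := mul_le_mul_of_nonneg_left h3 (show (0:ℝ) ≤ p * (-b/2) by nlinarith)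
      have h4' : p * ((-b/2) * (-b/2) ^ (p-1)) = p * (-b/2) ^ p := by
        rw [rpow_succ' (by linarith : (0:ℝ) ≤ -b/2) (by linarith : (0:ℝ) < p)]
      have h5 : (-b/2 : ℝ) ^ p = (-b) ^ p * 2 ^ (-p) := by
        rw [show (-b/2 : ℝ) = -b * 2⁻¹ by ring,
          Real.mul_rpow (by linarith) (by norm_num),
          Real.inv_rpow (by norm_num), ← Real.rpow_neg (by norm_num)]
      have h5' : p * (-b/2 : ℝ) ^ p = p * ((-b) ^ p * 2 ^ (-p)) := by rw [h5]
      have h9 : 2 * ((-b) ^ p * 2 ^ (-p)) ≤ p * ((-b) ^ p * 2 ^ (-p)) :=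
        mul_le_mul_of_nonneg_right (by linarith)
          (mul_nonneg (Real.rpow_nonneg (by linarith) p) (Real.rpow_nonneg (by norm_num) (-p)))
      have h10 : (2:ℝ) ^ (1 - p) * (-b) ^ p = 2 * ((-b) ^ p * 2 ^ (-p)) := by
        rw [h8]; ring
      linarith [h1, h2, h6, h4', h5', h9, h10]
    · -- crossing : a + b < 0
      rw [abs_of_neg hab]
      have hy : (0:ℝ) ≤ -(a+b) := by linarith
      have hcv := convex2 hp1.le ha hy
      rw [show a + -(a+b) = -b by ring] at hcv
      have hT : (0:ℝ) ≤ (2:ℝ) ^ (1-p) := Real.rpow_nonneg (by norm_num) _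
      have hcv' := mul_le_mul_of_nonneg_left hcv hT
      have hTS : (2:ℝ) ^ (1-p) * (2:ℝ) ^ (p-1) = 1 := by
        rw [← Real.rpow_add h2pos]; norm_num
      have hcv'' : (2:ℝ)^(1-p) * (2^(p-1) * (a ^ p + (-(a+b)) ^ p))
          = a ^ p + (-(a+b)) ^ p := by rw [← mul_assoc, hTS, one_mul]
      have hkey2 : a * a ^ (p-1) = a ^ p := rpow_succ' ha (by linarith)
      have hkey2p : p * (a * a ^ (p-1)) = p * a ^ p := by rw [hkey2]
      have hn1 : 0 ≤ (p - 2) * a ^ p :=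
        mul_nonneg (by linarith) (Real.rpow_nonneg ha p)
      have hn2 : 0 ≤ p * (a ^ (p-1) * -(a+b)) :=
        mul_nonneg (by linarith) (mul_nonneg (Real.rpow_nonneg ha _) hy)
      linarith [hcv', hcv'', hkey2p, hn1, hn2]
  · -- b = 0
    simp [Real.zero_rpow (show p ≠ 0 by linarith), abs_of_nonneg ha]
  · -- b > 0
    rw [abs_of_pos hb, abs_of_pos (by linarith : 0 < a + b)]
    have hm : (0:ℝ) ≤ a + b / 2 := by linarith
    have h1 := bern_low hp1 hm (show a + b/2 ≤ a + b by linarith)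
    have h2 := bern_low hp1 ha (show a ≤ a + b/2 by linarith)
    have h3 := superadd (by linarith : (1:ℝ) ≤ p - 1) ha (show (0:ℝ) ≤ b/2 by linarith)
    rw [show a + b/2 = a + b/2 by ring] at h3
    have h6 := mul_le_mul_of_nonneg_left h3 (show (0:ℝ) ≤ p * (b/2) by nlinarith)
    have h4' : p * ((b/2) * (b/2) ^ (p-1)) = p * (b/2) ^ p := by
      rw [rpow_succ' (by linarith : (0:ℝ) ≤ b/2) (by linarith : (0:ℝ) < p)]
    have h5 : (b/2 : ℝ) ^ p = b ^ p * 2 ^ (-p) := by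
      rw [show (b/2 : ℝ) = b * 2⁻¹ by ring,
        Real.mul_rpow (by linarith) (by norm_num),
        Real.inv_rpow (by norm_num), ← Real.rpow_neg (by norm_num)]
    have h5' : p * (b/2 : ℝ) ^ p = p * (b ^ p * 2 ^ (-p)) := by rw [h5]
    have h9 : 2 * (b ^ p * 2 ^ (-p)) ≤ p * (b ^ p * 2 ^ (-p)) :=
      mul_le_mul_of_nonneg_right (by linarith)
        (mul_nonneg (Real.rpow_nonneg (by linarith) p) (Real.rpow_nonneg (by norm_num) (-p)))
    have h10 : (2:ℝ) ^ (1 - p) * b ^ p = 2 * (b ^ p * 2 ^ (-p)) := by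
      rw [h8]; ring
    linarith [h1, h2, h6, h4', h5', h9, h10]

lemma lemII {p : ℝ} (hp : 2 < p) {a : ℝ} (ha : 0 ≤ a) (b : ℝ) :
    2 ^ (1 - p) * |a| ^ (p - 2) * b ^ 2 ≤ |a + b| ^ p - |a| ^ p - p * |a| ^ (p - 2) * a * b := by
  have hp1 : (1:ℝ) < p := by linarith
  have hp11 : (1:ℝ) < p - 1 := by linarith
  rw [abs_of_nonneg ha]
  have hkey : a ^ (p - 2) * a = a ^ (p - 1) := by
    rw [mul_comm]
    have := rpow_succ' ha (show (0:ℝ) < p - 1 by linarith)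
    rwa [show p - 1 - 1 = p - 2 by ring] at this
  rw [mul_assoc p (a ^ (p-2)) a, hkey]
  have h2pos : (0:ℝ) < 2 := by norm_num
  have h8 : (2:ℝ) ^ (1 - p) = 2 * 2 ^ (-p) := by
    rw [show (1:ℝ) - p = 1 + -p by ring, Real.rpow_add h2pos, Real.rpow_one]
  have h21 : (2:ℝ) ^ (1 - p) ≤ 1/2 := by
    calc (2:ℝ) ^ (1-p) ≤ 2 ^ (-1:ℝ) :=
      Real.rpow_le_rpow_of_exponent_le (by norm_num) (by linarith)
    _ = 1/2 := by rw [Real.rpow_neg_one]; norm_num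
  have hA2 : (0:ℝ) ≤ a ^ (p-2) := Real.rpow_nonneg ha _
  rcases ha.eq_or_lt with rfl | ha'
  · -- a = 0
    rw [Real.zero_rpow (show p - 2 ≠ 0 by intro h; rw [sub_eq_zero] at h; linarith),
      Real.zero_rpow (show p ≠ 0 by linarith),
      Real.zero_rpow (show p - 1 ≠ 0 by intro h; rw [sub_eq_zero] at h; linarith)]
    simp only [zero_add, mul_zero, zero_mul, sub_zero]
    positivity
  rcases lt_trichotomy b 0 with hb | rfl | hb
  · -- b < 0
    rcases le_or_gt 0 (a + b) with hab | hab
    · -- no crossing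
      rw [abs_of_nonneg hab]
      have hm : (0:ℝ) ≤ a + b / 2 := by linarith
      have hm2 : a/2 ≤ a + b/2 := by linarith
      have h1 := bern_up hp1.le hm (show a + b / 2 ≤ a by linarith)
      have h2 := bern_up hp1.le hab (show a + b ≤ a + b / 2 by linarith)
      have h3 := bern_low hp11 hm (show a + b/2 ≤ a by linarith)
      rw [show p - 1 - 1 = p - 2 by ring] at h3
      have h6 := mul_le_mul_of_nonneg_left h3 (show (0:ℝ) ≤ p * (-b/2) by nlinarith)
      have h7 : (a/2 : ℝ) ^ (p-2) ≤ (a + b/2) ^ (p-2) :=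
        Real.rpow_le_rpow (by linarith) hm2 (by linarith)
      have h7' := mul_le_mul_of_nonneg_left h7
        (show (0:ℝ) ≤ p * (p-1) * b^2 / 4 from
          div_nonneg (mul_nonneg (mul_nonneg (by linarith) (by linarith)) (sq_nonneg b))
            (by norm_num))
      have h8' : (a/2 : ℝ) ^ (p-2) = 4 * 2 ^ (-p) * a ^ (p-2) := by
        rw [show (a/2 : ℝ) = a * 2⁻¹ by ring,
          Real.mul_rpow ha (by norm_num),
          Real.inv_rpow (by norm_num), ← Real.rpow_neg (by norm_num),
          show -(p-2) = -p + 2 by ring, Real.rpow_add h2pos,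
          show ((2:ℝ) ^ (2:ℝ)) = 4 by rw [Real.rpow_two]; norm_num]
        ring
      have h8'' : p * (p-1) * b^2/4 * ((a/2) ^ (p-2))
          = p * (p-1) * (2 ^ (-p) * a ^ (p-2) * b^2) := by rw [h8']; ring
      have h9 : 2 * (2 ^ (-p) * a ^ (p-2) * b^2) ≤ p * (p-1) * (2 ^ (-p) * a ^ (p-2) * b^2) := by
        apply mul_le_mul_of_nonneg_right (by nlinarith)
        exact mul_nonneg (mul_nonneg (Real.rpow_nonneg (by norm_num) _) hA2) (sq_nonneg b)
      have h10 : (2:ℝ) ^ (1 - p) * a ^ (p-2) * b ^ 2 = 2 * (2 ^ (-p) * a ^ (p-2) * b^2) := by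
        rw [h8]; ring
      linarith [h1, h2, h6, h7', h8'', h9, h10]
    · -- crossing
      rw [abs_of_neg hab]
      have hy : (0:ℝ) ≤ -(a+b) := by linarith
      have hkey2 : a * a ^ (p-1) = a ^ p := rpow_succ' ha (by linarith)
      have hkey2p : p * (a * a ^ (p-1)) = p * a ^ p := by rw [hkey2]
      have haA : a ^ (p-2) * (a * a) = a ^ p := by
        rw [← mul_assoc, hkey, mul_comm (a ^ (p-1)) a, hkey2]
      have hmix := mixed hp ha hy
      have ht0 : b ^ 2 ≤ 2 * (a*a) + 2 * (-(a+b) * -(a+b)) := by nlinarith [sq_nonneg (a + (a+b))]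
      have t1 := mul_le_mul_of_nonneg_left ht0 hA2
      have c1 : (2:ℝ) ^ (1-p) * a ^ (p-2) * b ^ 2 ≤ 1/2 * (a ^ (p-2) * b ^ 2) := by
        have := mul_le_mul_of_nonneg_right h21 (mul_nonneg hA2 (sq_nonneg b))
        calc (2:ℝ) ^ (1-p) * a ^ (p-2) * b ^ 2 = 2 ^ (1-p) * (a ^ (p-2) * b^2) := by ring
        _ ≤ 1/2 * (a ^ (p-2) * b ^ 2) := this
      have hn1 : 0 ≤ (p - 2) * a ^ p := mul_nonneg (by linarith) (Real.rpow_nonneg ha p)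
      have hn2 : 0 ≤ (p-1) * (a ^ (p-1) * -(a+b)) :=
        mul_nonneg (by linarith) (mul_nonneg (Real.rpow_nonneg ha _) hy)
      have hn3 : 0 ≤ (-(a+b)) ^ p := Real.rpow_nonneg hy p
      linarith [t1, c1, haA, hmix, hkey2p, hn1, hn2, hn3]
  · -- b = 0
    simp [abs_of_nonneg ha]
  · -- b > 0
    rw [abs_of_pos (by linarith : 0 < a + b)]
    have hm : (0:ℝ) ≤ a + b / 2 := by linarith
    have h1 := bern_low hp1 hm (show a + b/2 ≤ a + b by linarith)
    have h2 := bern_low hp1 ha (show a ≤ a + b/2 by linarith)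
    have h3 := bern_low hp11 ha (show a ≤ a + b/2 by linarith)
    rw [show p - 1 - 1 = p - 2 by ring] at h3
    have h6 := mul_le_mul_of_nonneg_left h3 (show (0:ℝ) ≤ p * (b/2) by nlinarith)
    have c1 : (2:ℝ) ^ (1-p) * a ^ (p-2) * b ^ 2 ≤ 1/2 * (a ^ (p-2) * b ^ 2) := by
      have := mul_le_mul_of_nonneg_right h21 (mul_nonneg hA2 (sq_nonneg b))
      calc (2:ℝ) ^ (1-p) * a ^ (p-2) * b ^ 2 = 2 ^ (1-p) * (a ^ (p-2) * b^2) := by ring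
      _ ≤ 1/2 * (a ^ (p-2) * b ^ 2) := this
    have c2 : 1/2 * (a ^ (p-2) * b ^ 2) ≤ p * (p-1) / 4 * (a ^ (p-2) * b ^ 2) := by
      apply mul_le_mul_of_nonneg_right (by nlinarith) (mul_nonneg hA2 (sq_nonneg b))
    linarith [h1, h2, h6, c1, c2]

lemma pp1 {p : ℝ} (hp : 2 < p) : p * (p - 1) ≤ (2:ℝ) ^ (2 * p) := by
  have h1 : p ≤ (2:ℝ) ^ p := le_two_rpow (by linarith)
  have h2 : (0:ℝ) ≤ 2 ^ p := Real.rpow_nonneg (by norm_num) p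
  have h3 : (2:ℝ) ^ p * 2 ^ p = 2 ^ (2 * p) := by
    rw [← Real.rpow_add (by norm_num : (0:ℝ) < 2)]; ring_nf
  nlinarith [mul_le_mul h1 (show p - 1 ≤ (2:ℝ)^p by linarith) (by linarith) h2]

lemma pp2 {p : ℝ} (hp : 2 < p) : p * (p - 1) * (2:ℝ) ^ (p - 2) ≤ (2:ℝ) ^ (2 * p) := by
  have h1 : p / 2 ≤ (2:ℝ) ^ (p / 2) := le_two_rpow (by linarith)
  have h2 : (0:ℝ) ≤ 2 ^ (p/2) := Real.rpow_nonneg (by norm_num) _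
  have h3 : (2:ℝ) ^ (p/2) * 2 ^ (p/2) = 2 ^ p := by
    rw [← Real.rpow_add (by norm_num : (0:ℝ) < 2)]; ring_nf
  have h4 : p * (p - 1) ≤ 4 * (2:ℝ) ^ p := by
    nlinarith [mul_le_mul h1 (show (p-1)/2 ≤ (2:ℝ)^(p/2) by linarith) (by linarith) h2]
  have h5 : (0:ℝ) < 2 ^ (p - 2) := Real.rpow_pos_of_pos (by norm_num) _
  have h6 : 4 * ((2:ℝ) ^ p * 2 ^ (p - 2)) = 2 ^ (2 * p) := by
    rw [← Real.rpow_add (by norm_num : (0:ℝ) < 2),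
      show p + (p - 2) = 2 * p - 2 by ring, Real.rpow_sub (by norm_num : (0:ℝ) < 2),
      show ((2:ℝ) ^ (2:ℝ)) = 4 by rw [Real.rpow_two]; norm_num]
    ring
  nlinarith [mul_le_mul_of_nonneg_right h4 h5.le]

lemma lemU {p : ℝ} (hp : 2 < p) {a : ℝ} (ha : 0 ≤ a) (b : ℝ) :
    |a + b| ^ p - |a| ^ p - p * |a| ^ (p - 2) * a * b
      ≤ 2 ^ (2 * p) * (|a| ^ (p - 2) * b ^ 2 + |b| ^ p) := by
  have hp1 : (1:ℝ) < p := by linarith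
  have hp11 : (1:ℝ) < p - 1 := by linarith
  rw [abs_of_nonneg ha]
  have hkey : a ^ (p - 2) * a = a ^ (p - 1) := by
    rw [mul_comm]
    have := rpow_succ' ha (show (0:ℝ) < p - 1 by linarith)
    rwa [show p - 1 - 1 = p - 2 by ring] at this
  rw [mul_assoc p (a ^ (p-2)) a, hkey]
  have hA2 : (0:ℝ) ≤ a ^ (p-2) := Real.rpow_nonneg ha _
  have h2P : (0:ℝ) ≤ (2:ℝ) ^ (2*p) := Real.rpow_nonneg (by norm_num) _
  have hRn : (0:ℝ) ≤ 2 ^ (2*p) * (a ^ (p-2) * b^2) :=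
    mul_nonneg h2P (mul_nonneg hA2 (sq_nonneg b))
  rcases le_or_gt a |b| with hab | hab
  · -- a ≤ |b|
    have hBn : (0:ℝ) ≤ |b| := abs_nonneg b
    have h0 : |a + b| ≤ 2 * |b| := by
      calc |a + b| ≤ |a| + |b| := abs_add_le a b
      _ ≤ 2 * |b| := by rw [abs_of_nonneg ha]; linarith
    have h1 : |a + b| ^ p ≤ (2 * |b|) ^ p :=
      Real.rpow_le_rpow (abs_nonneg _) h0 (by linarith)
    have h2 : ((2:ℝ) * |b|) ^ p = 2 ^ p * |b| ^ p :=
      Real.mul_rpow (by norm_num) hBn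
    have h3 : a ^ (p-1) ≤ |b| ^ (p-1) := Real.rpow_le_rpow ha hab (by linarith)
    have h4 : |b| * |b| ^ (p-1) = |b| ^ p := rpow_succ' hBn (by linarith)
    have h4p : p * (|b| * |b| ^ (p-1)) = p * |b| ^ p := by rw [h4]
    have h5 : p ≤ (2:ℝ) ^ p := le_two_rpow (by linarith)
    have h6 : (2:ℝ) ^ p * 2 ≤ 2 ^ (2*p) := by
      have : (2:ℝ) ^ p * 2 = 2 ^ (p + 1) := by
        rw [Real.rpow_add (by norm_num : (0:ℝ) < 2), Real.rpow_one]
      rw [this]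
      exact Real.rpow_le_rpow_of_exponent_le (by norm_num) (by linarith)
    have h7 : p * a ^ (p-1) * (-b) ≤ p * a ^ (p-1) * |b| :=
      mul_le_mul_of_nonneg_left (neg_le_abs b)
        (mul_nonneg (by linarith) (Real.rpow_nonneg ha _))
    have h9 := mul_le_mul_of_nonneg_left h3 (mul_nonneg (by linarith : (0:ℝ) ≤ p) hBn)
    have h11 := mul_le_mul_of_nonneg_right h5 (Real.rpow_nonneg hBn p)
    have h12 := mul_le_mul_of_nonneg_right h6 (Real.rpow_nonneg hBn p)
    have hap : (0:ℝ) ≤ a ^ p := Real.rpow_nonneg ha p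
    linarith [h1, h2, h7, h9, h4p, h11, h12, hap, hRn]
  · -- |b| < a
    have ha' : (0:ℝ) < a := lt_of_le_of_lt (abs_nonneg b) hab
    have hpp := pp1 hp
    rcases le_or_gt 0 b with hb | hb
    · -- 0 ≤ b
      rw [abs_of_nonneg hb] at hab ⊢
      rw [abs_of_nonneg (by linarith : (0:ℝ) ≤ a + b)]
      have h1 := bern_up hp1.le ha (show a ≤ a + b by linarith)
      have h2 := bern_up hp11.le ha (show a ≤ a + b by linarith)
      rw [show p - 1 - 1 = p - 2 by ring] at h2
      have h3 : (a + b) ^ (p-2) ≤ (2*a) ^ (p-2) :=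
        Real.rpow_le_rpow (by linarith) (by linarith) (by linarith)
      have h4 : ((2:ℝ)*a) ^ (p-2) = 2 ^ (p-2) * a ^ (p-2) :=
        Real.mul_rpow (by norm_num) ha
      have m1 := mul_le_mul_of_nonneg_left h2
        (mul_nonneg (by linarith : (0:ℝ) ≤ p) hb)
      have m2 := mul_le_mul_of_nonneg_left h3
        (show (0:ℝ) ≤ p * (p-1) * b^2 from
          mul_nonneg (mul_nonneg (by linarith) (by linarith)) (sq_nonneg b))
      have m3 := mul_le_mul_of_nonneg_right (pp2 hp) (mul_nonneg hA2 (sq_nonneg b))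
      have m2' : p*(p-1)*b^2*(((2:ℝ)*a) ^ (p-2)) = p*(p-1)*2^(p-2)*(a^(p-2)*b^2) := by
        rw [h4]; ring
      have hbp : (0:ℝ) ≤ 2 ^ (2*p) * b ^ p :=
        mul_nonneg h2P (Real.rpow_nonneg hb p)
      linarith [h1, m1, m2, m2', m3, hbp]
    · -- b < 0
      rw [abs_of_neg hb] at hab ⊢
      rw [abs_of_nonneg (by linarith : (0:ℝ) ≤ a + b)]
      have h1 := bern_low hp1 (show (0:ℝ) ≤ a + b by linarith) (show a + b ≤ a by linarith)
      have h2 := bern_up hp11.le (show (0:ℝ) ≤ a + b by linarith) (show a + b ≤ a by linarith)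
      rw [show p - 1 - 1 = p - 2 by ring] at h2
      have m1 := mul_le_mul_of_nonneg_left h2
        (show (0:ℝ) ≤ p * (-b) from mul_nonneg (by linarith) (by linarith))
      have m2 := mul_le_mul_of_nonneg_right hpp (mul_nonneg hA2 (sq_nonneg b))
      have hbp : (0:ℝ) ≤ 2 ^ (2*p) * (-b) ^ p :=
        mul_nonneg h2P (Real.rpow_nonneg (by linarith) p)
      linarith [h1, m1, m2, hbp]


lemma scalar_lower {p : ℝ} (hp : 2 ≤ p) (a b : ℝ) :
    (2:ℝ) ^ (-p) * (|a| ^ (p - 2) * b ^ 2 + |b| ^ p)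
      ≤ |a + b| ^ p - |a| ^ p - p * |a| ^ (p - 2) * a * b := by
  rcases eq_or_lt_of_le hp with rfl | hp'
  · have e1 : ∀ x : ℝ, |x| ^ (2:ℝ) = x ^ 2 := fun x => by rw [Real.rpow_two, sq_abs]
    have e2 : (2:ℝ) ^ (-2:ℝ) = 1/4 := by
      rw [Real.rpow_neg (by norm_num), Real.rpow_two]; norm_num
    rw [show (2:ℝ) - 2 = 0 by norm_num, Real.rpow_zero, e1, e1, e1, e2]
    nlinarith [sq_nonneg b]
  · have key : ∀ c : ℝ, 0 ≤ c → ∀ d : ℝ,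
        (2:ℝ) ^ (-p) * (|c| ^ (p - 2) * d ^ 2 + |d| ^ p)
          ≤ |c + d| ^ p - |c| ^ p - p * |c| ^ (p - 2) * c * d := by
      intro c hc d
      have hI := lemI hp' hc d
      have hII := lemII hp' hc d
      have h8 : (2:ℝ) ^ (1 - p) = 2 * 2 ^ (-p) := by
        rw [show (1:ℝ) - p = 1 + -p by ring,
          Real.rpow_add (by norm_num : (0:ℝ) < 2), Real.rpow_one]
      rw [h8] at hI hII
      linarith [hI, hII]
    rcases le_or_gt 0 a with ha | ha
    · exact key a ha b
    · have h := key (-a) (by linarith) (-b)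
      rw [show -a + -b = -(a + b) by ring, abs_neg, abs_neg, abs_neg] at h
      linarith [h]

lemma scalar_upper {p : ℝ} (hp : 2 ≤ p) (a b : ℝ) :
    |a + b| ^ p - |a| ^ p - p * |a| ^ (p - 2) * a * b
      ≤ (2:ℝ) ^ (2 * p) * (|a| ^ (p - 2) * b ^ 2 + |b| ^ p) := by
  rcases eq_or_lt_of_le hp with rfl | hp'
  · have e1 : ∀ x : ℝ, |x| ^ (2:ℝ) = x ^ 2 := fun x => by rw [Real.rpow_two, sq_abs]
    have e2 : (2:ℝ) ^ ((2:ℝ) * 2) = 16 := by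
      rw [show (2:ℝ) * 2 = ((4:ℕ):ℝ) by norm_num, Real.rpow_natCast]; norm_num
    rw [show (2:ℝ) - 2 = 0 by norm_num, Real.rpow_zero, e1, e1, e1, e2]
    nlinarith [sq_nonneg b]
  · rcases le_or_gt 0 a with ha | ha
    · exact lemU hp' ha b
    · have h := lemU hp' (show (0:ℝ) ≤ -a by linarith) (-b)
      rw [show -a + -b = -(a + b) by ring, abs_neg, abs_neg, abs_neg] at h
      linarith [h]

/-- Second-order approximation of the smoothed `p`-norm (Lemma 3.1 of Adil et al.):
`2^{-p} h_p(r + s|x|^{p-2}, s, δ) ≤ h_p(r,s,x+δ) - h_p(r,s,x) - δᵀ∇ₓh_p(r,s,x)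
  ≤ 2^{2p} h_p(r + s|x|^{p-2}, s, δ)`. -/
theorem smoothed_p_norm_second_order_approx (p : ℝ) (hp : 2 ≤ p) (m : ℕ) (hm : 0 < m)
    (r : Fin m → ℝ) (hr : ∀ i, 0 ≤ r i) (s : ℝ) (hs : 0 ≤ s) (x δ : Fin m → ℝ) :
    (2 : ℝ) ^ (-p) * hP p (fun i => r i + s * |x i| ^ (p - 2)) s δ ≤
        hP p r s (x + δ) - hP p r s x - ∑ i, δ i * gradHP p r s x i ∧
      hP p r s (x + δ) - hP p r s x - ∑ i, δ i * gradHP p r s x i ≤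
        (2 : ℝ) ^ (2 * p) * hP p (fun i => r i + s * |x i| ^ (p - 2)) s δ := by
  have hsum : hP p r s (x + δ) - hP p r s x - ∑ i, δ i * gradHP p r s x i
      = ∑ i, (r i * (δ i) ^ 2
          + s * (|x i + δ i| ^ p - |x i| ^ p - p * |x i| ^ (p - 2) * x i * δ i)) := by
    simp only [hP, gradHP, Pi.add_apply, ← Finset.sum_sub_distrib]
    apply Finset.sum_congr rfl
    intro i _
    ring
  have hexp : ∀ C : ℝ, C * hP p (fun i => r i + s * |x i| ^ (p - 2)) s δ
      = ∑ i, C * ((r i + s * |x i| ^ (p - 2)) * (δ i) ^ 2 + s * |δ i| ^ p) := by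
    intro C
    rw [hP, Finset.mul_sum]
  constructor
  · rw [hsum, hexp]
    apply Finset.sum_le_sum
    intro i _
    have hsc := scalar_lower hp (x i) (δ i)
    have hsc' := mul_le_mul_of_nonneg_left hsc hs
    have h1 : (2:ℝ) ^ (-p) ≤ 1 :=
      Real.rpow_le_one_of_one_le_of_nonpos (by norm_num) (by linarith)
    have hrδ : 0 ≤ r i * (δ i) ^ 2 := mul_nonneg (hr i) (sq_nonneg _)
    have h2 : (0:ℝ) ≤ (2:ℝ) ^ (-p) := Real.rpow_nonneg (by norm_num) _
    nlinarith [hsc', hrδ, h1, h2]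
  · rw [hsum, hexp]
    apply Finset.sum_le_sum
    intro i _
    have hsc := scalar_upper hp (x i) (δ i)
    have hsc' := mul_le_mul_of_nonneg_left hsc hs
    have h1 : (1:ℝ) ≤ (2:ℝ) ^ (2 * p) := by
      have := Real.rpow_le_rpow_of_exponent_le (show (1:ℝ) ≤ 2 by norm_num)
        (show (0:ℝ) ≤ 2 * p by linarith)
      rwa [Real.rpow_zero] at this
    have hrδ : 0 ≤ r i * (δ i) ^ 2 := mul_nonneg (hr i) (sq_nonneg _)
    have h2 : (0:ℝ) ≤ (2:ℝ) ^ (2 * p) := Real.rpow_nonneg (by norm_num) _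
    nlinarith [hsc', hrδ, h1, h2]
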